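/- arXiv:2503.02575 — 2 statements merged into one kernel-verified Lean document; each statement's English description precedes it below -/
import Mathlib

section
/- The function v*(x) = (1 + |x|^{(p−2)(a_c − a)})^{−2/(p−2)}, with a_c = (n−2)/2, a < a_c and p > 2, is a positive radially symmetric solution of the Euler–Lagrange equation −div(|x|^{−2a} ∇u) = C |x|^{−bp} u^{p−1} on ℝⁿ ∖ {0} for an appropriate positive constant C, where b = a + 1 − n(1/2 − 1/p) (the critical relation for the Caffarelli–Kohn–Nirenberg inequality with c = 1, r = q = 2). -/
open MeasureTheory

open scoped RealInnerProductSpace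

/-- Partial derivative in the `i`-th coordinate direction. -/
noncomputable def pder {n : ℕ} (i : Fin n) (g : EuclideanSpace ℝ (Fin n) → ℝ)
    (x : EuclideanSpace ℝ (Fin n)) : ℝ :=
  fderiv ℝ g x (EuclideanSpace.single i 1)

private lemma inner_self_hasFDerivAt {E : Type*} [NormedAddCommGroup E]
    [InnerProductSpace ℝ E] (y : E) :
    HasFDerivAt (fun z : E => ⟪z, z⟫) ((2:ℝ) • (innerSL ℝ y)) y := by
  have h := (hasFDerivAt_id y).inner ℝ (hasFDerivAt_id (𝕜 := ℝ) y)
  refine h.congr_fderiv ?_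
  ext w
  simp [fderivInnerCLM_apply, two_smul, real_inner_comm]

private lemma scalar_key (n : ℕ) (a p b c s q m : ℝ)
    (hc : c = ((n:ℝ) - 2) / 2) (hp : 2 < p)
    (hb : b = a + 1 - n * (1 / 2 - 1 / p))
    (hs : s = (p - 2) * (c - a)) (hq : q = -2 / (p - 2)) (hm : m = -a + s/2 - 1)
    (t : ℝ) (ht : 0 < t) :
    -((n : ℝ) * (q * s * (t ^ m * (1 + t ^ (s/2)) ^ (q-1)))
        + 2 * t * (q * s * ((m * t ^ (m-1)) * (1 + t ^ (s/2)) ^ (q-1)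
          + t ^ m * (s/2 * t ^ (s/2 - 1) * (q-1) * (1 + t ^ (s/2)) ^ (q-1-1)))))
      = (2*p*(c-a)^2) * t ^ (-(b*p)/2) * ((1 + t ^ (s/2)) ^ q) ^ (p-1) := by
  have hp2 : (0:ℝ) < p - 2 := by linarith
  have hp0 : p ≠ 0 := by linarith
  have hT : 0 < 1 + t ^ (s/2) := by positivity
  have hE5 : ((1 + t ^ (s/2)) ^ q) ^ (p-1) = (1 + t ^ (s/2)) ^ (q-1-1) := by
    rw [← Real.rpow_mul hT.le]
    congr 1
    rw [hq]; field_simp; ring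
  have hE6 : t ^ (-(b*p)/2) = t ^ m := by
    congr 1
    rw [hm, hb, hs, hc]; field_simp; ring
  have e1 : t ^ (m-1) = t ^ m / t := by
    rw [eq_div_iff ht.ne', ← Real.rpow_add_one ht.ne']
    congr 1; ring
  have e2 : t ^ (s/2 - 1) = t ^ (s/2) / t := by
    rw [eq_div_iff ht.ne', ← Real.rpow_add_one ht.ne']
    congr 1; ring
  have e3 : (1 + t ^ (s/2)) ^ (q-1) = (1 + t ^ (s/2)) ^ (q-1-1) * (1 + t ^ (s/2)) := by
    rw [← Real.rpow_add_one hT.ne']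
    congr 1; ring
  rw [hE5, hE6, e1, e2, e3]
  rw [hm, hs, hq, hc]
  field_simp
  ring

/-- The radial profile `v*(x) = (1 + |x|^{(p−2)(a_c−a)})^{−2/(p−2)}`, `a_c = (n−2)/2`,
is a positive radially symmetric solution of
`−div(|x|^{−2a} ∇u) = C |x|^{−bp} u^{p−1}` on `ℝⁿ ∖ {0}` for a suitable `C > 0`, where
`b = a + 1 − n(1/2 − 1/p)`. -/
theorem radial_extremal_solves_CKN_EulerLagrange (n : ℕ) (hn : 3 ≤ n) (a p : ℝ)
    (ha : a < ((n : ℝ) - 2) / 2) (hp : 2 < p) (hp' : p ≤ 2 * n / ((n : ℝ) - 2))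
    (b : ℝ) (hb : b = a + 1 - n * (1 / 2 - 1 / p))
    (v : EuclideanSpace ℝ (Fin n) → ℝ)
    (hv : v = fun x => (1 + ‖x‖ ^ ((p - 2) * (((n : ℝ) - 2) / 2 - a))) ^ (-2 / (p - 2))) :
    (∀ x, 0 < v x) ∧
    (∀ x y : EuclideanSpace ℝ (Fin n), ‖x‖ = ‖y‖ → v x = v y) ∧
    ∃ C : ℝ, 0 < C ∧ ∀ x : EuclideanSpace ℝ (Fin n), x ≠ 0 →
      -(∑ i : Fin n, pder i (fun y => ‖y‖ ^ (-(2 * a)) * pder i v y) x) =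
        C * ‖x‖ ^ (-(b * p)) * v x ^ (p - 1) := by
  have hp2 : (0:ℝ) < p - 2 := by linarith
  set c : ℝ := ((n:ℝ) - 2) / 2 with hc
  set s : ℝ := (p - 2) * (c - a) with hs
  set q : ℝ := -2 / (p - 2) with hq
  set m : ℝ := -a + s/2 - 1 with hm
  have hca : 0 < c - a := by linarith
  refine ⟨?_, ?_, ?_⟩
  · intro x
    rw [hv]
    exact Real.rpow_pos_of_pos (by positivity) q
  · intro x y hxy
    rw [hv]
    simp only [hxy]
  · refine ⟨2 * p * (c - a)^2, by positivity, ?_⟩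
    intro x hx
    -- basic notation
    set nq : EuclideanSpace ℝ (Fin n) → ℝ := fun z => ⟪z, z⟫ with hnqdef
    have hnqval : ∀ y : EuclideanSpace ℝ (Fin n), nq y = ‖y‖ ^ 2 := fun y =>
      real_inner_self_eq_norm_sq y
    have hnqpos : ∀ y : EuclideanSpace ℝ (Fin n), y ≠ 0 → 0 < nq y := by
      intro y hy
      rw [hnqval y]
      have : 0 < ‖y‖ := norm_pos_iff.mpr hy
      positivity
    have hnqpow : ∀ (y : EuclideanSpace ℝ (Fin n)) (e : ℝ), (nq y) ^ (e/2) = ‖y‖ ^ e := by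
      intro y e
      rw [hnqval y, ← Real.rpow_natCast ‖y‖ 2, ← Real.rpow_mul (norm_nonneg y)]
      congr 1
      push_cast; ring
    set h : ℝ → ℝ := fun t => (1 + t ^ (s/2)) ^ q with hh
    set hder : ℝ → ℝ := fun t => s/2 * t ^ (s/2 - 1) * q * (1 + t ^ (s/2)) ^ (q-1)
      with hhder
    set G : ℝ → ℝ := fun t => q * s * (t ^ m * (1 + t ^ (s/2)) ^ (q-1)) with hG
    set Gder : ℝ → ℝ := fun t => q * s * ((m * t ^ (m-1)) * (1 + t ^ (s/2)) ^ (q-1)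
        + t ^ m * (s/2 * t ^ (s/2 - 1) * (q-1) * (1 + t ^ (s/2)) ^ (q-1-1))) with hGder
    have hT : ∀ t : ℝ, 0 < t → 0 < 1 + t ^ (s/2) := fun t ht => by positivity
    have Hh : ∀ t : ℝ, 0 < t → HasDerivAt h (hder t) t := by
      intro t ht
      have h1 : HasDerivAt (fun u : ℝ => 1 + u ^ (s/2)) (s/2 * t ^ (s/2 - 1)) t :=
        (Real.hasDerivAt_rpow_const (Or.inl ht.ne')).const_add 1
      exact h1.rpow_const (Or.inl (hT t ht).ne')
    have HG : ∀ t : ℝ, 0 < t → HasDerivAt G (Gder t) t := by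
      intro t ht
      have h1 : HasDerivAt (fun u : ℝ => u ^ m) (m * t ^ (m-1)) t :=
        Real.hasDerivAt_rpow_const (Or.inl ht.ne')
      have h2 : HasDerivAt (fun u : ℝ => (1 + u ^ (s/2)) ^ (q-1))
          (s/2 * t ^ (s/2 - 1) * (q-1) * (1 + t ^ (s/2)) ^ (q-1-1)) t :=
        ((Real.hasDerivAt_rpow_const (Or.inl ht.ne')).const_add 1).rpow_const
          (Or.inl (hT t ht).ne')
      exact (h1.mul h2).const_mul (q * s)
    have hvc : v = fun y => h (nq y) := by
      rw [hv]
      funext y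
      simp only [hh]
      rw [hnqpow y s]
    -- derivative of v
    have Hv : ∀ y : EuclideanSpace ℝ (Fin n), y ≠ 0 →
        HasFDerivAt v (hder (nq y) • ((2:ℝ) • innerSL ℝ y)) y := by
      intro y hy
      rw [hvc]
      exact (Hh (nq y) (hnqpos y hy)).comp_hasFDerivAt y (inner_self_hasFDerivAt y)
    have pv : ∀ (i : Fin n) (y : EuclideanSpace ℝ (Fin n)), y ≠ 0 →
        pder i v y = hder (nq y) * (2 * y i) := by
      intro i y hy
      unfold pder
      rw [(Hv y hy).fderiv]
      simp [EuclideanSpace.inner_single_right]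
      try ring
    have hx0 : 0 < nq x := hnqpos x hx
    -- the weighted gradient agrees with the nice closed form near x
    have hEv : ∀ i : Fin n,
        (fun y : EuclideanSpace ℝ (Fin n) => ‖y‖ ^ (-(2 * a)) * pder i v y)
          =ᶠ[nhds x] (fun y => G (nq y) * y i) := by
      intro i
      filter_upwards [eventually_ne_nhds hx] with y hy
      rw [pv i y hy]
      have ht := hnqpos y hy
      have A1 : ‖y‖ ^ (-(2 * a)) = (nq y) ^ (-a) := by
        rw [show (-a : ℝ) = (-(2*a))/2 by ring, hnqpow y (-(2*a))]
      have A2 : (nq y) ^ (-a) * (nq y) ^ (s/2 - 1) = (nq y) ^ m := by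
        rw [← Real.rpow_add ht]
        congr 1
        rw [hm]; ring
      simp only [hhder, hG]
      rw [A1]
      linear_combination (q * s * (1 + nq y ^ (s/2)) ^ (q-1) * y i) * A2
    -- derivative of the closed form
    have HΦ : ∀ i : Fin n, HasFDerivAt (fun y : EuclideanSpace ℝ (Fin n) => G (nq y) * y i)
        ((G (nq x)) • (EuclideanSpace.proj i (𝕜 := ℝ))
          + (x i) • (Gder (nq x) • ((2:ℝ) • innerSL ℝ x))) x := by
      intro i
      have g1 : HasFDerivAt (fun y : EuclideanSpace ℝ (Fin n) => G (nq y))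
          (Gder (nq x) • ((2:ℝ) • innerSL ℝ x)) x :=
        (HG (nq x) hx0).comp_hasFDerivAt x (inner_self_hasFDerivAt x)
      have g2 : HasFDerivAt (fun y : EuclideanSpace ℝ (Fin n) => y i)
          (EuclideanSpace.proj i (𝕜 := ℝ)) x := (EuclideanSpace.proj i (𝕜 := ℝ)).hasFDerivAt
      exact g1.mul g2
    have pW : ∀ i : Fin n, pder i (fun y => ‖y‖ ^ (-(2 * a)) * pder i v y) x
        = G (nq x) + x i * (Gder (nq x) * (2 * x i)) := by
      intro i
      show fderiv ℝ (fun y => ‖y‖ ^ (-(2 * a)) * pder i v y) x (EuclideanSpace.single i 1)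
        = G (nq x) + x i * (Gder (nq x) * (2 * x i))
      rw [(hEv i).fderiv_eq, (HΦ i).fderiv]
      simp [EuclideanSpace.inner_single_right, EuclideanSpace.single_apply]
      try ring
    have hsum : ∑ i : Fin n, pder i (fun y => ‖y‖ ^ (-(2 * a)) * pder i v y) x
        = (n : ℝ) * G (nq x) + 2 * nq x * Gder (nq x) := by
      rw [Finset.sum_congr rfl fun i _ => pW i]
      rw [Finset.sum_add_distrib, Finset.sum_const, Finset.card_univ, Fintype.card_fin,
        nsmul_eq_mul]
      have h2 : ∑ i : Fin n, x i * x i = nq x := by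
        simp only [hnqdef, PiLp.inner_apply, RCLike.inner_apply, starRingEnd_apply, star_trivial]
      have h3 : ∑ i : Fin n, x i * (Gder (nq x) * (2 * x i))
          = 2 * (∑ i : Fin n, x i * x i) * Gder (nq x) := by
        rw [Finset.mul_sum, Finset.sum_mul]
        exact Finset.sum_congr rfl fun i _ => by ring
      rw [h3, h2]
    rw [hsum]
    have hnrm : ‖x‖ ^ (-(b * p)) = (nq x) ^ (-(b*p)/2) := (hnqpow x (-(b*p))).symm
    have hvx : v x = (1 + (nq x) ^ (s/2)) ^ q := by rw [hvc]
    rw [hnrm, hvx]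
    simp only [hG, hGder]
    exact scalar_key n a p b c s q m hc hp hb hs hq hm (nq x) hx0
end

section
/- Parabolic Hausdorff content bound via covering: let S ⊂ ℝ × ℝ³ and suppose that for every (t,x) ∈ S, limsup_{r→0⁺} (1/r) ∫∫_{Q_r(t,x)} g dy dτ ≥ ε for some ε > 0 and g ∈ L¹(ℝ × ℝ³), g ≥ 0. Then the one-dimensional parabolic Hausdorff measure of S is zero: 𝒫¹(S) = 0. -/
open MeasureTheory Filter

noncomputable section

abbrev E3 := EuclideanSpace ℝ (Fin 3)

/-- The parabolic cylinder `Q_r(t,x) = {(τ,y) : |τ − t| < r², |y − x| < r}` in `ℝ × ℝ³`. -/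
def pCyl (r t : ℝ) (x : E3) : Set (ℝ × E3) :=
  {q | |q.1 - t| < r ^ 2 ∧ ‖q.2 - x‖ < r}

/-- The one-dimensional parabolic Hausdorff measure `𝒫¹(S)`, defined via countable
coverings by parabolic cylinders of radii at most `δ`, with gauge `r`, letting `δ → 0`. -/
def parabolicHausdorff1 (S : Set (ℝ × E3)) : ENNReal :=
  ⨆ (δ : ℝ) (_ : 0 < δ),
    ⨅ (c : ℕ → ℝ × E3) (ρ : ℕ → ℝ) (_ : ∀ i, 0 < ρ i ∧ ρ i ≤ δ)
      (_ : S ⊆ ⋃ i, pCyl (ρ i) (c i).1 (c i).2),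
      ∑' i, ENNReal.ofReal (ρ i)

namespace CKNAux

open Set Metric

lemma sqrt_add_le'' {a b : ℝ} (ha : 0 ≤ a) (hb : 0 ≤ b) :
    Real.sqrt (a + b) ≤ Real.sqrt a + Real.sqrt b := by
  rw [Real.sqrt_le_iff]
  refine ⟨by positivity, ?_⟩
  nlinarith [Real.sq_sqrt ha, Real.sq_sqrt hb, Real.sqrt_nonneg a, Real.sqrt_nonneg b]

/-- Type synonym of `ℝ × E3` carrying the parabolic metric. -/
def PM : Type := ℝ × E3

/-- The identity map from `PM` to `ℝ × E3`. -/
def PM.pt (p : PM) : ℝ × E3 := p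

instance : MetricSpace PM where
  dist p q := max (Real.sqrt |p.pt.1 - q.pt.1|) ‖p.pt.2 - q.pt.2‖
  dist_self p := by simp
  dist_comm p q := by
    show max (Real.sqrt |p.pt.1 - q.pt.1|) ‖p.pt.2 - q.pt.2‖ =
      max (Real.sqrt |q.pt.1 - p.pt.1|) ‖q.pt.2 - p.pt.2‖
    rw [abs_sub_comm, norm_sub_rev]
  dist_triangle p q r := by
    refine max_le (le_trans (le_trans (Real.sqrt_le_sqrt (abs_sub_le _ q.pt.1 _))
      (sqrt_add_le'' (abs_nonneg _) (abs_nonneg _)))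
      (add_le_add (le_max_left _ _) (le_max_left _ _))) ?_
    exact le_trans (norm_sub_le_norm_sub_add_norm_sub _ q.pt.2 _)
      (add_le_add (le_max_right _ _) (le_max_right _ _))
  eq_of_dist_eq_zero := by
    intro p q h
    have h1 : Real.sqrt |p.pt.1 - q.pt.1| ≤ 0 := le_trans (le_max_left _ _) h.le
    have h2 : ‖p.pt.2 - q.pt.2‖ ≤ 0 := le_trans (le_max_right _ _) h.le
    have e1 : p.pt.1 = q.pt.1 := by
      have h1' : |p.pt.1 - q.pt.1| ≤ 0 :=
        Real.sqrt_eq_zero'.mp (le_antisymm h1 (Real.sqrt_nonneg _))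
      have := le_antisymm h1' (abs_nonneg _)
      rwa [abs_eq_zero, sub_eq_zero] at this
    have e2 : p.pt.2 = q.pt.2 := by
      have := le_antisymm h2 (norm_nonneg _)
      rwa [norm_eq_zero, sub_eq_zero] at this
    exact Prod.ext e1 e2

lemma PM.dist_eq (p q : PM) :
    dist p q = max (Real.sqrt |p.pt.1 - q.pt.1|) ‖p.pt.2 - q.pt.2‖ := rfl

lemma mem_closedBall_pm {p q : PM} {r : ℝ} :
    q ∈ closedBall p r ↔ Real.sqrt |q.pt.1 - p.pt.1| ≤ r ∧ ‖q.pt.2 - p.pt.2‖ ≤ r := by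
  rw [Metric.mem_closedBall, PM.dist_eq, max_le_iff]

/-- Closed parabolic balls of radius `r` are inside open cylinders of radius `r' > r`. -/
lemma closedBall_subset_pCyl {p : PM} {r r' : ℝ} (hr : 0 ≤ r) (h : r < r') :
    (closedBall p r : Set PM) ⊆ pCyl r' p.pt.1 p.pt.2 := by
  intro q hq
  rw [mem_closedBall_pm] at hq
  have hr' : 0 < r' := lt_of_le_of_lt hr h
  refine ⟨?_, lt_of_le_of_lt hq.2 h⟩
  have h1 : |q.pt.1 - p.pt.1| ≤ r ^ 2 := (Real.sqrt_le_left hr).mp hq.1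
  have : r ^ 2 < r' ^ 2 := by nlinarith
  exact lt_of_le_of_lt h1 this

/-- Open cylinders of radius `r` are inside closed parabolic balls of radius `r`. -/
lemma pCyl_subset_closedBall {p : PM} {r : ℝ} :
    (pCyl r p.pt.1 p.pt.2 : Set (ℝ × E3)) ⊆ (closedBall p r : Set PM) := by
  intro q hq
  obtain ⟨h1, h2⟩ := hq
  have hr : 0 < r := lt_of_le_of_lt (norm_nonneg _) h2
  refine (mem_closedBall_pm (q := q)).mpr ?_
  constructor
  · rw [Real.sqrt_le_left hr.le]
    exact h1.le
  · exact h2.le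

lemma mem_pCyl_self {r : ℝ} (hr : 0 < r) (t : ℝ) (x : E3) : ((t, x) : ℝ × E3) ∈ pCyl r t x := by
  constructor <;> simp [hr, pow_pos hr]

lemma isOpen_pCyl (r t : ℝ) (x : E3) : IsOpen (pCyl r t x) := by
  have : pCyl r t x = ((fun q : ℝ × E3 => |q.1 - t|) ⁻¹' Set.Iio (r ^ 2)) ∩
      ((fun q : ℝ × E3 => ‖q.2 - x‖) ⁻¹' Set.Iio r) := rfl
  rw [this]
  exact ((continuous_fst.sub continuous_const).abs.isOpen_preimage _ isOpen_Iio).inter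
    ((continuous_snd.sub continuous_const).norm.isOpen_preimage _ isOpen_Iio)

lemma measurableSet_pCyl (r t : ℝ) (x : E3) : MeasurableSet (pCyl r t x) :=
  (isOpen_pCyl r t x).measurableSet

lemma pCyl_eq_prod (r t : ℝ) (x : E3) :
    pCyl r t x = Set.Ioo (t - r ^ 2) (t + r ^ 2) ×ˢ Metric.ball x r := by
  ext ⟨τ, y⟩
  simp only [pCyl, Set.mem_setOf_eq, Set.mem_prod, Set.mem_Ioo, Metric.mem_ball,
    dist_eq_norm, abs_sub_lt_iff]
  constructor
  · rintro ⟨⟨a, b⟩, c⟩; exact ⟨⟨by linarith, by linarith⟩, c⟩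
  · rintro ⟨⟨a, b⟩, c⟩; exact ⟨⟨by linarith, by linarith⟩, c⟩

/-- Volume of a small parabolic cylinder, bounded linearly in `r` with constant `δ⁴`. -/
lemma volume_pCyl_le {r δ : ℝ} (hr : 0 < r) (hrδ : r ≤ δ) (hδ : δ ≤ 1) (t : ℝ) (x : E3) :
    volume (pCyl r t x) ≤
      ENNReal.ofReal (2 * δ ^ 4 * r) * volume (Metric.ball (0 : E3) 1) := by
  rw [pCyl_eq_prod, Measure.volume_eq_prod, Measure.prod_prod, Real.volume_Ioo,
    Measure.addHaar_ball volume x hr.le, finrank_euclideanSpace_fin]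
  have h1 : t + r ^ 2 - (t - r ^ 2) = 2 * r ^ 2 := by ring
  rw [h1, ← mul_assoc, ← ENNReal.ofReal_mul (by positivity)]
  refine mul_le_mul' (ENNReal.ofReal_le_ofReal ?_) le_rfl
  have h4 : r ^ 4 ≤ δ ^ 4 := pow_le_pow_left₀ hr.le hrδ 4
  nlinarith [mul_le_mul_of_nonneg_right h4 hr.le]


/-- The identity map from `ℝ × E3` to `PM`. -/
def PM.mk (p : ℝ × E3) : PM := p

/-- The parabolic closed ball, regarded as a subset of the ordinary product space. -/
def pmBall (a : (ℝ × E3) × ℝ) : Set (ℝ × E3) :=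
  (closedBall (PM.mk a.1) a.2 : Set PM)

/-- The Vitali covering step: if every point of `S` is the center of arbitrarily small
parabolic cylinders carrying `ν`-mass at least `(ε/2)·r`, then `S` can be covered by
cylinders of radii at most `δ` with total radius controlled by `ν U`, `U ⊇ S` open. -/
lemma vitali_step (ν : Measure (ℝ × E3)) [IsFiniteMeasure ν] {ε : ℝ} (hε : 0 < ε)
    (S U : Set (ℝ × E3)) (hU : IsOpen U) (hSU : S ⊆ U)
    (hpt : ∀ p ∈ S, ∀ r₀ : ℝ, 0 < r₀ → ∃ r : ℝ, 0 < r ∧ r < r₀ ∧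
      ENNReal.ofReal (ε / 2 * r) ≤ ν (pCyl r p.1 p.2))
    {δ η : ℝ} (hδ : 0 < δ) (hη : 0 < η) :
    ∃ (c : ℕ → ℝ × E3) (ρ : ℕ → ℝ), (∀ i, 0 < ρ i ∧ ρ i ≤ δ) ∧
      (S ⊆ ⋃ i, pCyl (ρ i) (c i).1 (c i).2) ∧
      ∑' i, ENNReal.ofReal (ρ i) ≤ ENNReal.ofReal (10 / ε) * ν U + ENNReal.ofReal η := by
  classical
  set t : Set ((ℝ × E3) × ℝ) :=
    {a | a.1 ∈ S ∧ 0 < a.2 ∧ a.2 ≤ δ / 5 ∧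
      (closedBall (PM.mk a.1) a.2 : Set PM) ⊆ U ∧
      ENNReal.ofReal (ε / 2 * a.2) ≤ ν (pCyl a.2 a.1.1 a.1.2)} with ht
  -- every point of `S` is the center of arbitrarily small members of `t`
  have hT : ∀ p ∈ S, ∃ r : ℝ, 0 < r ∧ (p, r) ∈ t := by
    intro p hp
    obtain ⟨s, hs, hsU⟩ : ∃ s : ℝ, 0 < s ∧ (closedBall (PM.mk p) s : Set PM) ⊆ U := by
      obtain ⟨w, hw, hwU⟩ := Metric.isOpen_iff.mp hU p (hSU hp)
      refine ⟨min (w / 2) (Real.sqrt (w / 2)), by positivity, ?_⟩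
      intro q hq
      rw [mem_closedBall_pm] at hq
      apply hwU
      have hb1 : Real.sqrt |q.pt.1 - p.1| < Real.sqrt w := by
        refine lt_of_le_of_lt (le_trans hq.1 (min_le_right _ _)) ?_
        exact Real.sqrt_lt_sqrt (by positivity) (by linarith)
      have h1 : |q.pt.1 - p.1| < w := by
        by_contra hcon
        push_neg at hcon
        exact absurd (Real.sqrt_le_sqrt hcon) (not_le.mpr hb1)
      have h2 : ‖q.pt.2 - p.2‖ < w :=
        lt_of_le_of_lt (le_trans hq.2 (min_le_left _ _)) (by linarith)
      show q.pt ∈ Metric.ball p w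
      rw [Metric.mem_ball, Prod.dist_eq, Real.dist_eq, dist_eq_norm]
      exact max_lt h1 h2
    obtain ⟨r, hr0, hrlt, hrν⟩ := hpt p hp (min s (δ / 5)) (by positivity)
    refine ⟨r, hr0, hp, hr0, le_trans hrlt.le (min_le_right _ _), ?_, hrν⟩
    exact le_trans (Metric.closedBall_subset_closedBall
      (le_trans hrlt.le (min_le_left _ _))) hsU
  -- Vitali covering lemma in the parabolic metric
  obtain ⟨u, hut, hdisj, hcov⟩ :=
    Vitali.exists_disjoint_subfamily_covering_enlargement_closedBall t
      (fun a => PM.mk a.1) (fun a => a.2) (δ / 5) (fun a ha => ha.2.2.1) 4 (by norm_num)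
  have hdisj' : u.PairwiseDisjoint pmBall := hdisj
  -- the subfamily is countable
  have hucount : u.Countable := by
    apply hdisj'.countable_of_nonempty_interior
    intro a ha
    have hat := hut ha
    refine ⟨(a.1.1, a.1.2), ?_⟩
    have hsub : pCyl a.2 a.1.1 a.1.2 ⊆ interior (pmBall a) :=
      (isOpen_pCyl _ _ _).subset_interior_iff.mpr
        (pCyl_subset_closedBall (p := PM.mk a.1))
    exact hsub (mem_pCyl_self hat.2.1 _ _)
  haveI : Countable ↥u := hucount.to_subtype
  haveI : Encodable ↥u := hucount.toEncodable
  set emb : ↥u → ℕ := Encodable.encode with hemb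
  have hinj : Function.Injective emb := Encodable.encode_injective
  set pad : ℕ → ℝ := fun n => min δ (η / 2 / 2 ^ n) with hpad
  refine ⟨Function.extend emb (fun b => (b : (ℝ × E3) × ℝ).1) (fun _ => ((0 : ℝ), (0 : E3))),
    Function.extend emb (fun b => 5 * (b : (ℝ × E3) × ℝ).2) pad, ?_, ?_, ?_⟩
  · -- radii are positive and at most δ
    intro n
    by_cases h : ∃ b, emb b = n
    · obtain ⟨b, rfl⟩ := h
      have hb := hut b.2
      rw [hinj.extend_apply]
      exact ⟨by linarith [hb.2.1], by linarith [hb.2.2.1]⟩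
    · rw [Function.extend_apply' _ _ _ h]
      exact ⟨lt_min hδ (by positivity), min_le_left _ _⟩
  · -- covering property
    intro p hp
    obtain ⟨r, hr0, hrt⟩ := hT p hp
    obtain ⟨b, hbu, hbsub⟩ := hcov (p, r) hrt
    have hbt := hut hbu
    refine Set.mem_iUnion.mpr ⟨emb ⟨b, hbu⟩, ?_⟩
    rw [hinj.extend_apply, hinj.extend_apply]
    have hmem : (PM.mk p) ∈ closedBall (PM.mk b.1) (4 * b.2) :=
      hbsub (Metric.mem_closedBall_self hr0.le)
    have hsub : (closedBall (PM.mk b.1) (4 * b.2) : Set PM) ⊆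
        pCyl (5 * b.2) b.1.1 b.1.2 :=
      closedBall_subset_pCyl (by linarith [hbt.2.1]) (by linarith [hbt.2.1])
    exact hsub hmem
  · -- total radius bound
    have hle : ∀ n, ENNReal.ofReal (Function.extend emb
          (fun b => 5 * (b : (ℝ × E3) × ℝ).2) pad n) ≤
        Function.extend emb
          (fun b => ENNReal.ofReal (5 * (b : (ℝ × E3) × ℝ).2)) 0 n
          + ENNReal.ofReal (pad n) := by
      intro n
      by_cases h : ∃ b, emb b = n
      · obtain ⟨b, rfl⟩ := h
        rw [hinj.extend_apply, hinj.extend_apply]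
        exact le_self_add
      · rw [Function.extend_apply' _ _ _ h, Function.extend_apply' _ _ _ h]
        simp
    have hA : ∑' n, Function.extend emb
        (fun b => ENNReal.ofReal (5 * (b : (ℝ × E3) × ℝ).2)) 0 n ≤
        ENNReal.ofReal (10 / ε) * ν U := by
      rw [tsum_extend_zero hinj]
      have heq : ∀ b : ↥u, ENNReal.ofReal (5 * (b : (ℝ × E3) × ℝ).2) =
          ENNReal.ofReal (10 / ε) * ENNReal.ofReal (ε / 2 * (b : (ℝ × E3) × ℝ).2) := by
        intro b
        rw [← ENNReal.ofReal_mul (by positivity)]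
        congr 1
        field_simp
        ring
      calc ∑' b : ↥u, ENNReal.ofReal (5 * (b : (ℝ × E3) × ℝ).2)
          = ∑' b : ↥u, ENNReal.ofReal (10 / ε)
              * ENNReal.ofReal (ε / 2 * (b : (ℝ × E3) × ℝ).2) := tsum_congr heq
        _ = ENNReal.ofReal (10 / ε)
              * ∑' b : ↥u, ENNReal.ofReal (ε / 2 * (b : (ℝ × E3) × ℝ).2) :=
            ENNReal.tsum_mul_left
        _ ≤ ENNReal.ofReal (10 / ε) * ν U := by
            refine mul_le_mul' le_rfl ?_
            have hterm : ∀ b : ↥u, ENNReal.ofReal (ε / 2 * (b : (ℝ × E3) × ℝ).2) ≤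
                ν (pCyl (b : (ℝ × E3) × ℝ).2 (b : (ℝ × E3) × ℝ).1.1
                  (b : (ℝ × E3) × ℝ).1.2) := fun b => (hut b.2).2.2.2.2
            refine le_trans (ENNReal.tsum_le_tsum hterm) ?_
            have hdisj2 : Pairwise (Function.onFun Disjoint fun b : ↥u =>
                pCyl (b : (ℝ × E3) × ℝ).2 (b : (ℝ × E3) × ℝ).1.1
                  (b : (ℝ × E3) × ℝ).1.2) := by
              intro b b' hne
              have hD : Disjoint (pmBall (b : (ℝ × E3) × ℝ))
                  (pmBall (b' : (ℝ × E3) × ℝ)) :=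
                hdisj' b.2 b'.2 (Subtype.coe_injective.ne hne)
              have hm1 : pCyl (b : (ℝ × E3) × ℝ).2 (b : (ℝ × E3) × ℝ).1.1
                  (b : (ℝ × E3) × ℝ).1.2 ⊆ pmBall (b : (ℝ × E3) × ℝ) :=
                pCyl_subset_closedBall (p := PM.mk _)
              have hm2 : pCyl (b' : (ℝ × E3) × ℝ).2 (b' : (ℝ × E3) × ℝ).1.1
                  (b' : (ℝ × E3) × ℝ).1.2 ⊆ pmBall (b' : (ℝ × E3) × ℝ) :=
                pCyl_subset_closedBall (p := PM.mk _)
              exact hD.mono hm1 hm2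
            rw [← measure_iUnion hdisj2 (fun b => measurableSet_pCyl _ _ _)]
            refine measure_mono (Set.iUnion_subset ?_)
            intro b
            refine le_trans (pCyl_subset_closedBall (p := PM.mk _)) ?_
            exact (hut b.2).2.2.2.1
    have hB : ∑' n, ENNReal.ofReal (pad n) ≤ ENNReal.ofReal η := by
      have h1 : ∀ n, ENNReal.ofReal (pad n) ≤ ENNReal.ofReal (η / 2 / 2 ^ n) :=
        fun n => ENNReal.ofReal_le_ofReal (min_le_right _ _)
      calc ∑' n, ENNReal.ofReal (pad n)
          ≤ ∑' n, ENNReal.ofReal (η / 2 / 2 ^ n) := ENNReal.tsum_le_tsum h1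
        _ = ENNReal.ofReal (∑' n, η / 2 / 2 ^ n) :=
            (ENNReal.ofReal_tsum_of_nonneg (fun n => by positivity)
              (summable_geometric_two' η)).symm
        _ = ENNReal.ofReal η := by rw [tsum_geometric_two' η]
    calc ∑' n, ENNReal.ofReal (Function.extend emb
          (fun b => 5 * (b : (ℝ × E3) × ℝ).2) pad n)
        ≤ ∑' n, (Function.extend emb
            (fun b => ENNReal.ofReal (5 * (b : (ℝ × E3) × ℝ).2)) 0 n
            + ENNReal.ofReal (pad n)) := ENNReal.tsum_le_tsum hle
      _ = (∑' n, Function.extend emb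
            (fun b => ENNReal.ofReal (5 * (b : (ℝ × E3) × ℝ).2)) 0 n)
            + ∑' n, ENNReal.ofReal (pad n) := ENNReal.tsum_add
      _ ≤ ENNReal.ofReal (10 / ε) * ν U + ENNReal.ofReal η := add_le_add hA hB


end CKNAux

open CKNAux in
/-- Covering step in the Caffarelli–Kohn–Nirenberg partial regularity theorem: if `g ≥ 0`
is integrable on `ℝ × ℝ³` and every point `(t,x)` of `S` satisfies
`limsup_{r→0⁺} (1/r)∫∫_{Q_r(t,x)} g ≥ ε` for a fixed `ε > 0`, then `𝒫¹(S) = 0`. -/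
theorem parabolic_hausdorff_covering (g : ℝ × E3 → ℝ) (hg : Integrable g)
    (hg0 : ∀ q, 0 ≤ g q) (ε : ℝ) (hε : 0 < ε) (S : Set (ℝ × E3))
    (hS : ∀ p ∈ S,
      ε ≤ limsup (fun r : ℝ => (1 / r) * ∫ q in pCyl r p.1 p.2, g q) (nhdsWithin 0 (Set.Ioi 0))) :
    parabolicHausdorff1 S = 0 := by
  classical
  have hgm := hg.aestronglyMeasurable
  set f := hgm.mk g with hf
  have hfm : MeasureTheory.StronglyMeasurable f := hgm.stronglyMeasurable_mk
  have hgf : g =ᵐ[volume] f := hgm.ae_eq_mk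
  set G : ℝ × E3 → ENNReal := fun q => ENNReal.ofReal (f q) with hG
  have hGm : Measurable G := hfm.measurable.ennreal_ofReal
  set ν : Measure (ℝ × E3) := volume.withDensity G with hν
  have hGae : (fun q => ENNReal.ofReal (g q)) =ᵐ[volume] G := by
    filter_upwards [hgf] with q hq
    simp [hG, hq]
  haveI hνfin : IsFiniteMeasure ν := by
    constructor
    rw [hν, withDensity_apply _ MeasurableSet.univ, Measure.restrict_univ]
    calc ∫⁻ q, G q = ∫⁻ q, ENNReal.ofReal (g q) := lintegral_congr_ae hGae.symm
      _ ≤ ∫⁻ q, ‖g q‖ₑ := lintegral_mono fun q => Real.ofReal_le_enorm _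
      _ < ⊤ := hg.2
  have hint : ∀ A : Set (ℝ × E3), MeasurableSet A →
      ∫ q in A, g q = (ν A).toReal := by
    intro A hA
    rw [integral_eq_lintegral_of_nonneg_ae
      (Filter.Eventually.of_forall fun q => hg0 q) hgm.restrict]
    congr 1
    rw [hν, withDensity_apply _ hA]
    exact lintegral_congr_ae (ae_restrict_of_ae hGae)
  -- translate the density hypothesis
  have hpt : ∀ p ∈ S, ∀ r₀ : ℝ, 0 < r₀ → ∃ r : ℝ, 0 < r ∧ r < r₀ ∧
      ENNReal.ofReal (ε / 2 * r) ≤ ν (pCyl r p.1 p.2) := by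
    intro p hp r₀ hr₀
    have hfreq : ∃ᶠ r in nhdsWithin (0 : ℝ) (Set.Ioi 0),
        ε / 2 < (1 / r) * ∫ q in pCyl r p.1 p.2, g q := by
      apply Filter.frequently_lt_of_lt_limsup
      · apply Filter.isCoboundedUnder_le_of_eventually_le
          (l := nhdsWithin (0 : ℝ) (Set.Ioi 0)) (x := 0)
        filter_upwards [self_mem_nhdsWithin] with r hr
        have hr' : (0 : ℝ) < r := hr
        have : 0 ≤ ∫ q in pCyl r p.1 p.2, g q := integral_nonneg hg0
        positivity
      · exact lt_of_lt_of_le (by linarith) (hS p hp)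
    have hev : ∀ᶠ r in nhdsWithin (0 : ℝ) (Set.Ioi 0), r < r₀ ∧ 0 < r := by
      filter_upwards [mem_nhdsWithin_of_mem_nhds (Iio_mem_nhds hr₀),
        self_mem_nhdsWithin] with r h1 h2
      exact ⟨h1, h2⟩
    obtain ⟨r, hgt, hlt, hpos⟩ := (hfreq.and_eventually hev).exists
    refine ⟨r, hpos, hlt, ?_⟩
    have hi : ε / 2 * r ≤ ∫ q in pCyl r p.1 p.2, g q := by
      have h2 : r * (ε / 2) < r * ((1 / r) * ∫ q in pCyl r p.1 p.2, g q) :=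
        mul_lt_mul_of_pos_left hgt hpos
      rw [← mul_assoc, mul_one_div, div_self hpos.ne', one_mul] at h2
      linarith
    rw [hint _ (measurableSet_pCyl _ _ _)] at hi
    exact ENNReal.ofReal_le_of_le_toReal hi
  -- Step 1: `S` is Lebesgue-null
  have hvol : volume S = 0 := by
    set B := volume (Metric.ball (0 : E3) 1) with hB
    have hBfin : B ≠ ⊤ := measure_ball_lt_top.ne
    set K := ENNReal.ofReal (10 / ε) * ν Set.univ + ENNReal.ofReal 1 with hK
    have hKfin : K ≠ ⊤ :=
      ENNReal.add_ne_top.mpr ⟨ENNReal.mul_ne_top ENNReal.ofReal_ne_top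
        (measure_ne_top ν _), ENNReal.ofReal_ne_top⟩
    have key : ∀ δ : ℝ, 0 < δ → δ ≤ 1 →
        volume S ≤ ENNReal.ofReal (2 * δ ^ 4) * (B * K) := by
      intro δ hδ hδ1
      obtain ⟨c, ρ, hρ, hcov, hsum⟩ := vitali_step ν hε S Set.univ isOpen_univ
        (Set.subset_univ S) hpt hδ one_pos
      have hsum' : ∑' i, ENNReal.ofReal (ρ i) ≤ K := hsum
      calc volume S ≤ volume (⋃ i, pCyl (ρ i) (c i).1 (c i).2) := measure_mono hcov
        _ ≤ ∑' i, volume (pCyl (ρ i) (c i).1 (c i).2) := measure_iUnion_le _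
        _ ≤ ∑' i, ENNReal.ofReal (2 * δ ^ 4 * ρ i) * B :=
            ENNReal.tsum_le_tsum fun i => volume_pCyl_le (hρ i).1 (hρ i).2 hδ1 _ _
        _ = ∑' i, ENNReal.ofReal (2 * δ ^ 4) * (ENNReal.ofReal (ρ i) * B) := by
            refine tsum_congr fun i => ?_
            rw [ENNReal.ofReal_mul (by positivity), mul_assoc]
        _ = ENNReal.ofReal (2 * δ ^ 4) * ((∑' i, ENNReal.ofReal (ρ i)) * B) := by
            rw [ENNReal.tsum_mul_left, ENNReal.tsum_mul_right]
        _ ≤ ENNReal.ofReal (2 * δ ^ 4) * (K * B) := by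
            refine mul_le_mul' le_rfl (mul_le_mul' hsum' le_rfl)
        _ = ENNReal.ofReal (2 * δ ^ 4) * (B * K) := by rw [mul_comm K B]
    have hlim : Tendsto (fun n : ℕ => ENNReal.ofReal (2 * (1 / ((n : ℝ) + 1)) ^ 4)
        * (B * K)) atTop (nhds 0) := by
      have h0 : Tendsto (fun n : ℕ => 2 * (1 / ((n : ℝ) + 1)) ^ 4) atTop (nhds 0) := by
        have h1 := ((tendsto_one_div_add_atTop_nhds_zero_nat (𝕜 := ℝ)).pow 4).const_mul 2
        simpa using h1
      have h2 := ENNReal.Tendsto.mul_const (ENNReal.tendsto_ofReal h0)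
        (Or.inr (ENNReal.mul_ne_top hBfin hKfin))
      simpa using h2
    have hle0 : volume S ≤ 0 := by
      refine ge_of_tendsto' hlim fun n => key (1 / ((n : ℝ) + 1)) (by positivity) ?_
      rw [div_le_one (by positivity)]
      simp
    exact le_antisymm hle0 zero_le'
  -- Step 2: `ν S = 0`
  have hνS : ν S = 0 := by
    have habs : ν ≪ volume := withDensity_absolutelyContinuous volume G
    exact habs hvol
  -- conclusion
  show (⨆ (δ : ℝ) (_ : 0 < δ),
    ⨅ (c : ℕ → ℝ × E3) (ρ : ℕ → ℝ) (_ : ∀ i, 0 < ρ i ∧ ρ i ≤ δ)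
      (_ : S ⊆ ⋃ i, pCyl (ρ i) (c i).1 (c i).2),
      ∑' i, ENNReal.ofReal (ρ i)) = 0
  refine le_antisymm ?_ zero_le'
  refine iSup_le fun δ => iSup_le fun hδ => ?_
  apply ENNReal.le_of_forall_pos_le_add
  intro η' hη' _
  rw [zero_add]
  set w : ℝ := (η' : ℝ) with hw
  have hw0 : 0 < w := hη'
  have hνlt : ν S < ENNReal.ofReal (ε * w / 20) := by
    rw [hνS]
    exact ENNReal.ofReal_pos.mpr (by positivity)
  obtain ⟨U, hSU, hUopen, hνU⟩ := Set.exists_isOpen_lt_of_lt S _ hνlt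
  obtain ⟨c, ρ, hρ, hcov, hsum⟩ := vitali_step ν hε S U hUopen hSU hpt hδ
    (half_pos hw0)
  have hsum2 : ∑' i, ENNReal.ofReal (ρ i) ≤ (η' : ENNReal) := by
    refine le_trans hsum ?_
    have h1 : ENNReal.ofReal (10 / ε) * ν U ≤ ENNReal.ofReal (w / 2) := by
      refine le_trans (mul_le_mul' le_rfl hνU.le) ?_
      rw [← ENNReal.ofReal_mul (by positivity)]
      refine ENNReal.ofReal_le_ofReal (le_of_eq ?_)
      field_simp
      ring
    calc ENNReal.ofReal (10 / ε) * ν U + ENNReal.ofReal (w / 2)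
        ≤ ENNReal.ofReal (w / 2) + ENNReal.ofReal (w / 2) := add_le_add h1 le_rfl
      _ = ENNReal.ofReal (w / 2 + w / 2) := (ENNReal.ofReal_add (by positivity) (by positivity)).symm
      _ = ENNReal.ofReal w := by rw [add_halves]
      _ = (η' : ENNReal) := ENNReal.ofReal_coe_nnreal
  refine le_trans ?_ hsum2
  exact iInf_le_of_le c (iInf_le_of_le ρ (iInf_le_of_le hρ (iInf_le_of_le hcov le_rfl)))

end
end
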